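/- For all m, p > 0, the inclusion of the top edge T = {(r·cos φ, r·sin φ, m) : φ ∈ [−π,π], r = (|φ|/π)·sin(πp/m) + 2} into HV(m,p) induces an isomorphism of fundamental groups π₁(T, z_m) ≅ π₁(HV(m,p), z_m), where z_m = (2,0,m). -/

import Mathlib

set_option maxHeartbeats 1000000


open Real Set

noncomputable section

/-- The pedestal of a harmonic vase: the disc of radius 3 in the plane `z = 0`. -/
def HVpedestal : Set (ℝ × ℝ × ℝ) :=
  {q | q.1 ^ 2 + q.2.1 ^ 2 ≤ 9 ∧ q.2.2 = 0}

/-- The wall of the harmonic vase `HV(m,p)`. -/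
def HVwall (m p : ℝ) : Set (ℝ × ℝ × ℝ) :=
  {q | ∃ z ∈ Set.Ioc (0 : ℝ) m, ∃ φ ∈ Set.Icc (-π) π,
    q = ((|φ| / π * Real.sin (π * p / z) + 2) * Real.cos φ,
         (|φ| / π * Real.sin (π * p / z) + 2) * Real.sin φ, z)}

/-- The harmonic vase `HV(m,p)` as a subset of `ℝ³`. -/
def HV (m p : ℝ) : Set (ℝ × ℝ × ℝ) := HVpedestal ∪ HVwall m p

/-- The top edge of the harmonic vase `HV(m,p)`: its intersection with the plane
`z = m`. -/
def HVtop (m p : ℝ) : Set (ℝ × ℝ × ℝ) :=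
  {q | ∃ φ ∈ Set.Icc (-π) π,
    q = ((|φ| / π * Real.sin (π * p / m) + 2) * Real.cos φ,
         (|φ| / π * Real.sin (π * p / m) + 2) * Real.sin φ, m)}

namespace HVaux

/-- the bottom junction point -/
def bot : ℝ × ℝ × ℝ := (2, 0, 0)

/-- radial coordinate -/
def rho (q : ℝ × ℝ × ℝ) : ℝ := Real.sqrt (q.1 ^ 2 + q.2.1 ^ 2)

/-- the radius profile value -/
def rr (φ s : ℝ) : ℝ := |φ| / π * s + 2

/-- slide a wall point to height `h` along its own angular ray -/
def slide (p : ℝ) (q : ℝ × ℝ × ℝ) (h : ℝ) : ℝ × ℝ × ℝ :=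
  ((arccos (q.1 / rho q) / π * Real.sin (π * p / h) + 2) * (q.1 / rho q),
   (arccos (q.1 / rho q) / π * Real.sin (π * p / h) + 2) * (q.2.1 / rho q), h)

/-- collapse the pedestal to the bottom junction point -/
def col (q : ℝ × ℝ × ℝ) : ℝ × ℝ × ℝ := if q.2.2 = 0 then bot else q

/-- the wall together with the junction point -/
def Wplus (m p : ℝ) : Set (ℝ × ℝ × ℝ) := HVwall m p ∪ {bot}

/-- clamp to `[0,1]` -/
def cl (u : ℝ) : ℝ := max 0 (min 1 u)

lemma cl_mem (u : ℝ) : cl u ∈ Icc (0:ℝ) 1 :=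
  ⟨le_max_left _ _, max_le zero_le_one (min_le_left _ _)⟩

lemma cl_zero : cl 0 = 0 := by norm_num [cl]

lemma cl_one : cl 1 = 1 := by norm_num [cl]

lemma cl_coe (u : ℝ) (hu : u ∈ Icc (0:ℝ) 1) : cl u = u := by
  simp [cl, min_eq_right hu.2, max_eq_right hu.1]

lemma continuous_cl : Continuous cl :=
  continuous_const.max (continuous_const.min continuous_id)

lemma rr_mem (φ s : ℝ) (hφ : |φ| ≤ π) (hs : |s| ≤ 1) : rr φ s ∈ Icc (1:ℝ) 3 := by
  have hπ := Real.pi_pos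
  have h1 : |φ| / π ≤ 1 := by rw [div_le_one hπ]; exact hφ
  have h0 : 0 ≤ |φ| / π := div_nonneg (abs_nonneg _) hπ.le
  have : abs (|φ| / π * s) ≤ 1 := by
    rw [abs_mul, abs_of_nonneg h0]
    calc |φ| / π * |s| ≤ 1 * 1 := by
          exact mul_le_mul h1 hs (abs_nonneg _) zero_le_one
      _ = 1 := by ring
  rw [abs_le] at this
  constructor <;> [skip; skip] <;> simp [rr] <;> nlinarith [this.1, this.2]

/-- canonical representation of a wall point -/
lemma wall_spec {m p q} (hq : q ∈ HVwall m p) :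
    q.2.2 ∈ Ioc (0:ℝ) m ∧ ∃ φ ∈ Icc (-π) π,
      q = (rr φ (Real.sin (π * p / q.2.2)) * Real.cos φ,
           rr φ (Real.sin (π * p / q.2.2)) * Real.sin φ, q.2.2) := by
  obtain ⟨z, hz, φ, hφ, rfl⟩ := hq
  exact ⟨hz, φ, hφ, rfl⟩


section pointdata

variable {φ r z : ℝ}

lemma rho_eq (hφ : φ ∈ Icc (-π) π) (hr : 1 ≤ r) :
    rho (r * Real.cos φ, r * Real.sin φ, z) = r := by
  have h1 : (r * Real.cos φ) ^ 2 + (r * Real.sin φ) ^ 2 = r ^ 2 := by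
    have := Real.sin_sq_add_cos_sq φ
    ring_nf
    nlinarith [this]
  rw [rho]
  simp only
  rw [h1, Real.sqrt_sq (by linarith)]

lemma arccos_div (hφ : φ ∈ Icc (-π) π) (hr : 1 ≤ r) :
    arccos ((r * Real.cos φ, r * Real.sin φ, z).1 / rho (r * Real.cos φ, r * Real.sin φ, z))
      = |φ| := by
  rw [rho_eq hφ hr]
  have hr0 : r ≠ 0 := by linarith
  have : r * Real.cos φ / r = Real.cos φ := by field_simp
  rw [this]
  rcases le_or_gt 0 φ with h | h
  · rw [abs_of_nonneg h]; exact Real.arccos_cos h hφ.2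
  · rw [abs_of_neg h, ← Real.cos_neg]
    exact Real.arccos_cos (by linarith) (by linarith [hφ.1])

lemma slide_eq (p h : ℝ) (hφ : φ ∈ Icc (-π) π) (hr : 1 ≤ r) :
    slide p (r * Real.cos φ, r * Real.sin φ, z) h
      = (rr φ (Real.sin (π * p / h)) * Real.cos φ,
         rr φ (Real.sin (π * p / h)) * Real.sin φ, h) := by
  have hr0 : r ≠ 0 := by linarith
  have ha := arccos_div (z := z) hφ hr
  rw [rho_eq hφ hr] at ha
  rw [slide, rho_eq hφ hr]
  simp only at ha ⊢
  rw [ha]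
  have h1 : r * Real.cos φ / r = Real.cos φ := by field_simp
  have h2 : r * Real.sin φ / r = Real.sin φ := by field_simp
  rw [h1, h2, rr]

end pointdata

section sets

variable {m p : ℝ} {q : ℝ × ℝ × ℝ}

lemma abs_sin_le_one (x : ℝ) : |Real.sin x| ≤ 1 :=
  abs_le.mpr ⟨Real.neg_one_le_sin x, Real.sin_le_one x⟩

lemma mk_wall {z φ : ℝ} (hz : z ∈ Ioc (0:ℝ) m) (hφ : φ ∈ Icc (-π) π) :
    (rr φ (Real.sin (π * p / z)) * Real.cos φ,
     rr φ (Real.sin (π * p / z)) * Real.sin φ, z) ∈ HVwall m p :=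
  ⟨z, hz, φ, hφ, by rw [rr]⟩

lemma mk_top {φ : ℝ} (hφ : φ ∈ Icc (-π) π) :
    (rr φ (Real.sin (π * p / m)) * Real.cos φ,
     rr φ (Real.sin (π * p / m)) * Real.sin φ, m) ∈ HVtop m p :=
  ⟨φ, hφ, by rw [rr]⟩

lemma abs_le_pi {φ : ℝ} (hφ : φ ∈ Icc (-π) π) : |φ| ≤ π := abs_le.mpr ⟨hφ.1, hφ.2⟩

lemma rr_mem' {φ : ℝ} (hφ : φ ∈ Icc (-π) π) (x : ℝ) : rr φ (Real.sin x) ∈ Icc (1:ℝ) 3 :=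
  rr_mem φ _ (abs_le_pi hφ) (abs_sin_le_one x)

lemma slide_mem_wall {h : ℝ} (hq : q ∈ HVwall m p) (hh : h ∈ Ioc (0:ℝ) m) :
    slide p q h ∈ HVwall m p := by
  obtain ⟨hz, φ, hφ, hrep⟩ := wall_spec hq
  rw [hrep, slide_eq _ _ hφ (rr_mem' hφ _).1]
  exact mk_wall hh hφ

lemma slide_m_mem_top (hq : q ∈ HVwall m p) : slide p q m ∈ HVtop m p := by
  obtain ⟨hz, φ, hφ, hrep⟩ := wall_spec hq
  rw [hrep, slide_eq _ _ hφ (rr_mem' hφ _).1]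
  exact mk_top hφ

lemma slide_self (hq : q ∈ HVwall m p) : slide p q q.2.2 = q := by
  obtain ⟨hz, φ, hφ, hrep⟩ := wall_spec hq
  rw [hrep] at hz ⊢
  rw [slide_eq _ _ hφ (rr_mem' hφ _).1]

lemma top_z (hq : q ∈ HVtop m p) : q.2.2 = m := by
  obtain ⟨φ, hφ, rfl⟩ := hq; rfl

lemma top_subset_wall (hm : 0 < m) : HVtop m p ⊆ HVwall m p := by
  rintro q ⟨φ, hφ, rfl⟩
  exact ⟨m, ⟨hm, le_refl m⟩, φ, hφ, rfl⟩

lemma slide_fix_top (hm : 0 < m) (hq : q ∈ HVtop m p) : slide p q m = q := by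
  have h := slide_self (top_subset_wall hm hq)
  rwa [top_z hq] at h

lemma basepoint_mem_top : ((2:ℝ), (0:ℝ), m) ∈ HVtop m p := by
  have hφ : (0:ℝ) ∈ Icc (-π) π := ⟨by linarith [Real.pi_pos], Real.pi_pos.le⟩
  have := mk_top (m := m) (p := p) hφ
  simpa [rr] using this

lemma basepoint_mem_wall (hm : 0 < m) : ((2:ℝ), (0:ℝ), m) ∈ HVwall m p :=
  top_subset_wall hm basepoint_mem_top

lemma seam_mem_wall {h : ℝ} (hh : h ∈ Ioc (0:ℝ) m) : ((2:ℝ), (0:ℝ), h) ∈ HVwall m p := by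
  have hφ : (0:ℝ) ∈ Icc (-π) π := ⟨by linarith [Real.pi_pos], Real.pi_pos.le⟩
  have := mk_wall (p := p) hh hφ
  simpa [rr] using this

lemma bot_mem_pedestal : bot ∈ HVpedestal := by norm_num [bot, HVpedestal]

lemma rho_bot : rho bot = 2 := by
  rw [bot, rho]
  norm_num

lemma slide_bot (h : ℝ) : slide p bot h = ((2:ℝ), (0:ℝ), h) := by
  rw [slide, rho_bot, bot]
  norm_num

lemma col_z : (col q).2.2 = q.2.2 := by
  rw [col]; split <;> simp_all [bot]

lemma col_mem_Wplus (hq : q ∈ HV m p) : col q ∈ Wplus m p := by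
  rw [col]; split
  · exact Or.inr rfl
  · rcases hq with h | h
    · exact absurd h.2 (by assumption)
    · exact Or.inl h

lemma wall_z_pos (hq : q ∈ HVwall m p) : 0 < q.2.2 := (wall_spec hq).1.1

lemma Wplus_cases (hq : q ∈ Wplus m p) : q ∈ HVwall m p ∨ q = bot := hq

lemma rho_wall (hq : q ∈ HVwall m p) : rho q ∈ Icc (1:ℝ) 3 := by
  obtain ⟨hz, φ, hφ, hrep⟩ := wall_spec hq
  rw [hrep, rho_eq hφ (rr_mem' hφ _).1]
  exact rr_mem' hφ _

lemma rho_ge_one_Wplus (hq : q ∈ Wplus m p) : 1 ≤ rho q := by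
  rcases hq with h | h
  · exact (rho_wall h).1
  · rw [h, rho_bot]; norm_num

lemma z_mem_Wplus (hm : 0 ≤ m) (hq : q ∈ Wplus m p) : q.2.2 ∈ Icc (0:ℝ) m := by
  rcases hq with h | h
  · exact ⟨(wall_spec h).1.1.le, (wall_spec h).1.2⟩
  · rw [h]; exact ⟨le_refl _, hm⟩

lemma z_zero_Wplus (hq : q ∈ Wplus m p) (h0 : q.2.2 = 0) : q = bot := by
  rcases hq with h | h
  · exact absurd h0 (wall_z_pos h).ne'
  · exact h

lemma slide_self_Wplus (hq : q ∈ Wplus m p) : slide p q q.2.2 = q := by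
  rcases hq with h | h
  · exact slide_self h
  · rw [h]; rw [show (bot.2.2 : ℝ) = 0 from rfl, slide_bot]; rfl

lemma slide_m_mem_top_Wplus (hq : q ∈ Wplus m p) : slide p q m ∈ HVtop m p := by
  rcases hq with h | h
  · exact slide_m_mem_top h
  · rw [h, slide_bot]; exact basepoint_mem_top

lemma slide_mem_wall_Wplus {h : ℝ} (hq : q ∈ Wplus m p) (hh : h ∈ Ioc (0:ℝ) m) :
    slide p q h ∈ HVwall m p := by
  rcases hq with h' | h'
  · exact slide_mem_wall h' hh
  · rw [h', slide_bot]; exact seam_mem_wall hh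

lemma mem_pedestal_of_z (hq : q ∈ HV m p) (h0 : q.2.2 = 0) : q ∈ HVpedestal := by
  rcases hq with h | h
  · exact h
  · exact absurd h0 (wall_z_pos h).ne'

lemma wall_subset_HV : HVwall m p ⊆ HV m p := subset_union_right

lemma Wplus_subset_HV : Wplus m p ⊆ HV m p := by
  rintro q (h | h)
  · exact Or.inr h
  · rw [h]; exact Or.inl bot_mem_pedestal

end sets

section analysis

lemma one_sub_cos_le (x : ℝ) : 1 - Real.cos x ≤ x^2/2 := by
  have h1 := Real.cos_two_mul (x/2)
  have h2 := Real.sin_sq_add_cos_sq (x/2)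
  have h3 := Real.sin_sq_le_sq (x := x/2)
  have h4 : (2:ℝ) * (x/2) = x := by ring
  rw [h4] at h1
  nlinarith

lemma abs_le_three {a b : ℝ} (h : a^2 + b^2 ≤ 9) : |a| ≤ 3 := by
  rw [abs_le]
  constructor <;> nlinarith [sq_nonneg b, sq_nonneg (a+3), sq_nonneg (a-3)]

lemma near_sq {x a ε : ℝ} (h1 : x - a ≤ ε) (h2 : -ε ≤ x - a) (ha : -3 ≤ a) (ha' : a ≤ 3)
    (hε : 0 ≤ ε) (hε1 : ε ≤ 1) : x^2 ≤ a^2 + 7*ε ∧ a^2 ≤ x^2 + 7*ε := by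
  have p1 : 0 ≤ (3 - a) * (ε + (x - a)) := mul_nonneg (by linarith) (by linarith)
  have p2 : 0 ≤ (3 + a) * (ε - (x - a)) := mul_nonneg (by linarith) (by linarith)
  have p3 : 0 ≤ (3 - a) * (ε - (x - a)) := mul_nonneg (by linarith) (by linarith)
  have p4 : 0 ≤ (3 + a) * (ε + (x - a)) := mul_nonneg (by linarith) (by linarith)
  have p5 : 0 ≤ (ε - (x - a)) * (ε + (x - a)) := mul_nonneg (by linarith) (by linarith)
  constructor <;> nlinarith [sq_nonneg (x - a)]

lemma radius_gap {x y ε : ℝ} (h : x^2 - y^2 ≤ 28*ε) (hx : 2 ≤ x) (hy : 1 ≤ y) (hy2 : y ≤ 2)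
    (hε : 0 ≤ ε) : x - y ≤ 11*ε := by
  have hq : 0 ≤ (x - y) * (x + y - 3) := mul_nonneg (by linarith) (by linarith)
  nlinarith

lemma hv_arith {ε a b φp φm : ℝ} (hε : 0 < ε) (hε1 : ε ≤ 1)
    (hφp : |φp| ≤ π) (hφm : |φm| ≤ π)
    (hab : a^2 + b^2 ≤ 9)
    (h1 : |(|φp|/π + 2) * Real.cos φp - a| ≤ ε)
    (h2 : |(|φp|/π + 2) * Real.sin φp - b| ≤ ε)
    (h3 : |(2 - |φm|/π) * Real.cos φm - a| ≤ ε)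
    (h4 : |(2 - |φm|/π) * Real.sin φm - b| ≤ ε) :
    |a - 2| ≤ 1000 * ε ∧ |b| ≤ 1000 * ε := by
  have hπ3 := Real.pi_gt_three
  have hπ4 : π < 4 := by linarith [Real.pi_lt_d2]
  have hπ := Real.pi_pos
  have hP0 : 0 ≤ |φp| := abs_nonneg _
  have hM0 : 0 ≤ |φm| := abs_nonneg _
  set P := |φp| with hPdef
  set M := |φm| with hMdef
  set rp : ℝ := P/π + 2 with hrp
  set rm : ℝ := 2 - M/π with hrm
  set cp := Real.cos φp
  set sp := Real.sin φp
  set cm := Real.cos φm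
  set sm := Real.sin φm
  have hrp2 : 2 ≤ rp := by have : 0 ≤ P/π := div_nonneg hP0 hπ.le; rw [hrp]; linarith
  have hrp3 : rp ≤ 3 := by have : P/π ≤ 1 := (div_le_one hπ).2 hφp; rw [hrp]; linarith
  have hrm1 : 1 ≤ rm := by have : M/π ≤ 1 := (div_le_one hπ).2 hφm; rw [hrm]; linarith
  have hrm2 : rm ≤ 2 := by have : 0 ≤ M/π := div_nonneg hM0 hπ.le; rw [hrm]; linarith
  have ha3 : |a| ≤ 3 := abs_le_three hab
  have hb3 : |b| ≤ 3 := abs_le_three (by linarith : b^2 + a^2 ≤ 9)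
  rw [abs_le] at h1 h2 h3 h4 ha3 hb3
  have pyth_p : (rp*cp)^2 + (rp*sp)^2 = rp^2 := by
    have h := Real.sin_sq_add_cos_sq φp
    linear_combination rp^2 * h
  have pyth_m : (rm*cm)^2 + (rm*sm)^2 = rm^2 := by
    have h := Real.sin_sq_add_cos_sq φm
    linear_combination rm^2 * h
  have e1 := near_sq h1.2 h1.1 ha3.1 ha3.2 hε.le hε1
  have e2 := near_sq h2.2 h2.1 hb3.1 hb3.2 hε.le hε1
  have e3 := near_sq h3.2 h3.1 ha3.1 ha3.2 hε.le hε1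
  have e4 := near_sq h4.2 h4.1 hb3.1 hb3.2 hε.le hε1
  have hgap : rp^2 - rm^2 ≤ 28*ε := by linarith [e1.1, e2.1, e3.2, e4.2, pyth_p, pyth_m]
  have hrr : rp - rm ≤ 11*ε := radius_gap hgap hrp2 hrm1 hrm2 hε.le
  have hPε : P ≤ 50*ε := by
    have hPeq : P = (rp - 2) * π := by rw [hrp]; field_simp; ring
    have : (rp - 2) * π ≤ (11*ε) * 4 :=
      mul_le_mul (by linarith) (by linarith) hπ.le (by linarith)
    linarith
  have hcos1 : cp ≤ 1 := Real.cos_le_one φp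
  have hcos0 : 0 ≤ 1 - cp := by linarith
  have hcos : 1 - cp ≤ 100*ε := by
    have h5 := one_sub_cos_le φp
    have h6 : φp^2 = P^2 := (sq_abs φp).symm
    have h7 : P^2 ≤ P * π := by
      rw [sq]; exact mul_le_mul_of_nonneg_left hφp hP0
    have h8 : P * π ≤ (50*ε) * 4 :=
      mul_le_mul hPε (by linarith) hπ.le (by linarith)
    linarith
  have hsin : |sp| ≤ 50*ε := le_trans (Real.abs_sin_le_abs) hPε
  have hprod : rp * (1 - cp) ≤ 3 * (100*ε) :=
    mul_le_mul hrp3 hcos hcos0 (by norm_num)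
  have hprod0 : 0 ≤ rp * (1 - cp) := mul_nonneg (by linarith) hcos0
  have hid : rp * cp = rp - rp*(1-cp) := by ring
  have hrpsp : |rp * sp| ≤ 150*ε := by
    rw [abs_mul, abs_of_nonneg (by linarith : (0:ℝ) ≤ rp)]
    calc rp * |sp| ≤ 3 * (50*ε) :=
          mul_le_mul hrp3 hsin (abs_nonneg _) (by norm_num)
      _ = 150*ε := by ring
  rw [abs_le] at hrpsp
  constructor
  · rw [abs_le]
    constructor <;>
      linarith [h1.1, h1.2, hid, hprod, hprod0, hrr, hrp2, hrp3, hrm2, hε.le]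
  · rw [abs_le]
    constructor <;> linarith [h2.1, h2.2, hrpsp.1, hrpsp.2, hε.le]

lemma key {E : Type*} [NormedAddCommGroup E] [NormedSpace ℝ E]
    {m p : ℝ} (hp : 0 < p) {F : E → ℝ × ℝ × ℝ} (hF : Continuous F)
    (hmem : ∀ x, F x ∈ HV m p) {x₀ : E}
    (hcl : x₀ ∈ closure {x | (F x).2.2 ≠ 0}) (h0 : (F x₀).2.2 = 0) :
    F x₀ = bot := by
  set q := F x₀ with hq
  have hped : q ∈ HVpedestal := mem_pedestal_of_z (hmem x₀) h0
  have hab : q.1 ^ 2 + q.2.1 ^ 2 ≤ 9 := hped.1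
  have main : ∀ ε : ℝ, 0 < ε → ε ≤ 1 → |q.1 - 2| ≤ 1000 * ε ∧ |q.2.1| ≤ 1000 * ε := by
    intro ε hε hε1
    obtain ⟨δ, hδ0, hδ⟩ := Metric.continuousAt_iff.mp hF.continuousAt ε hε
    set B := Metric.ball x₀ δ with hB
    have hBconn : IsPreconnected B := (convex_ball x₀ δ).isPreconnected
    have hzc : Continuous fun x => (F x).2.2 := (continuous_snd.comp continuous_snd).comp hF
    set J := (fun x => (F x).2.2) '' B with hJdef
    have hJ : IsPreconnected J := hBconn.image _ hzc.continuousOn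
    have hJo := hJ.ordConnected
    have h0J : (0:ℝ) ∈ J := ⟨x₀, Metric.mem_ball_self hδ0, h0⟩
    obtain ⟨x₁, hx₁, hx₁d⟩ := Metric.mem_closure_iff.mp hcl δ hδ0
    have hx₁B : x₁ ∈ B := by rwa [hB, Metric.mem_ball, dist_comm]
    have hz₁pos : 0 < (F x₁).2.2 := by
      rcases hmem x₁ with h | h
      · exact absurd h.2 hx₁
      · exact wall_z_pos h
    set z₁ := (F x₁).2.2 with hz₁
    have hz₁J : z₁ ∈ J := ⟨x₁, hx₁B, rfl⟩
    set k := ⌈2*p/z₁⌉₊ with hk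
    have hkk : 2*p/z₁ ≤ (k:ℝ) := Nat.le_ceil _
    have hk0 : (0:ℝ) ≤ (k:ℝ) := Nat.cast_nonneg k
    have h2p : 2*p ≤ (k:ℝ) * z₁ := (div_le_iff₀ hz₁pos).mp hkk
    have h4k1 : (0:ℝ) < 4*(k:ℝ)+1 := by linarith
    have h4k3 : (0:ℝ) < 4*(k:ℝ)+3 := by linarith
    set zp := 2*p/(4*(k:ℝ)+1) with hzp
    set zm := 2*p/(4*(k:ℝ)+3) with hzm
    have hzp_pos : 0 < zp := by rw [hzp]; positivity
    have hzm_pos : 0 < zm := by rw [hzm]; positivity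
    have hzp_le : zp ≤ z₁ := by
      rw [hzp, div_le_iff₀ h4k1]; nlinarith
    have hzm_le : zm ≤ z₁ := by
      rw [hzm, div_le_iff₀ h4k3]; nlinarith
    obtain ⟨xp, hxpB, hxpz⟩ := hJo.out h0J hz₁J ⟨hzp_pos.le, hzp_le⟩
    obtain ⟨xm, hxmB, hxmz⟩ := hJo.out h0J hz₁J ⟨hzm_pos.le, hzm_le⟩
    replace hxpz : (F xp).2.2 = zp := hxpz
    replace hxmz : (F xm).2.2 = zm := hxmz
    have hwp : F xp ∈ HVwall m p := by
      rcases hmem xp with h | h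
      · exact absurd (hxpz.symm.trans h.2) hzp_pos.ne'
      · exact h
    have hwm : F xm ∈ HVwall m p := by
      rcases hmem xm with h | h
      · exact absurd (hxmz.symm.trans h.2) hzm_pos.ne'
      · exact h
    obtain ⟨hzp', φp, hφp, hrepp⟩ := wall_spec hwp
    obtain ⟨hzm', φm, hφm, hrepm⟩ := wall_spec hwm
    have hs1 : Real.sin (π * p / (F xp).2.2) = 1 := by
      rw [hxpz]
      have harg : π * p / zp = π/2 + (k:ℤ) * (2*π) := by
        rw [hzp]; push_cast; field_simp; ring
      rw [harg, Real.sin_add_int_mul_two_pi, Real.sin_pi_div_two]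
    have hs2 : Real.sin (π * p / (F xm).2.2) = -1 := by
      rw [hxmz]
      have harg : π * p / zm = (π/2 + π) + (k:ℤ) * (2*π) := by
        rw [hzm]; push_cast; field_simp; ring
      rw [harg, Real.sin_add_int_mul_two_pi, Real.sin_add_pi, Real.sin_pi_div_two]
    -- distance bounds
    have hdp : dist (F xp) q ≤ ε := (hδ hxpB).le
    have hdm : dist (F xm) q ≤ ε := (hδ hxmB).le
    have fst_le : ∀ u v : ℝ × ℝ × ℝ, dist u.1 v.1 ≤ dist u v := fun u v => by
      rw [Prod.dist_eq]; exact le_max_left _ _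
    have snd_le : ∀ u v : ℝ × ℝ × ℝ, dist u.2.1 v.2.1 ≤ dist u v := fun u v => by
      rw [Prod.dist_eq (x := u) (y := v), Prod.dist_eq (x := u.2) (y := v.2)]
      exact le_trans (le_max_left _ _) (le_max_right _ _)
    have hxp1 : |(F xp).1 - q.1| ≤ ε := by
      rw [← Real.dist_eq]; exact le_trans (fst_le _ _) hdp
    have hxp2 : |(F xp).2.1 - q.2.1| ≤ ε := by
      rw [← Real.dist_eq]; exact le_trans (snd_le _ _) hdp
    have hxm1 : |(F xm).1 - q.1| ≤ ε := by
      rw [← Real.dist_eq]; exact le_trans (fst_le _ _) hdm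
    have hxm2 : |(F xm).2.1 - q.2.1| ≤ ε := by
      rw [← Real.dist_eq]; exact le_trans (snd_le _ _) hdm
    have hFp1 : (F xp).1 = (|φp|/π + 2) * Real.cos φp := by
      rw [hrepp]; simp only [rr, hs1]; ring_nf
    have hFp2 : (F xp).2.1 = (|φp|/π + 2) * Real.sin φp := by
      rw [hrepp]; simp only [rr, hs1]; ring_nf
    have hFm1 : (F xm).1 = (2 - |φm|/π) * Real.cos φm := by
      rw [hrepm]; simp only [rr, hs2]; ring_nf
    have hFm2 : (F xm).2.1 = (2 - |φm|/π) * Real.sin φm := by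
      rw [hrepm]; simp only [rr, hs2]; ring_nf
    rw [hFp1] at hxp1; rw [hFp2] at hxp2; rw [hFm1] at hxm1; rw [hFm2] at hxm2
    exact hv_arith hε hε1 (abs_le_pi hφp) (abs_le_pi hφm) hab hxp1 hxp2 hxm1 hxm2
  have ha : q.1 = 2 := by
    by_contra hne
    have hpos : 0 < |q.1 - 2| := abs_pos.mpr (sub_ne_zero.mpr hne)
    have hη := main (min 1 (|q.1 - 2| / 2000)) (by positivity) (min_le_left _ _)
    have h1 : 1000 * min 1 (|q.1 - 2| / 2000) ≤ 1000 * (|q.1 - 2| / 2000) :=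
      mul_le_mul_of_nonneg_left (min_le_right _ _) (by norm_num)
    have := hη.1
    linarith
  have hb : q.2.1 = 0 := by
    by_contra hne
    have hpos : 0 < |q.2.1| := abs_pos.mpr hne
    have hη := main (min 1 (|q.2.1| / 2000)) (by positivity) (min_le_left _ _)
    have h1 : 1000 * min 1 (|q.2.1| / 2000) ≤ 1000 * (|q.2.1| / 2000) :=
      mul_le_mul_of_nonneg_left (min_le_right _ _) (by norm_num)
    have := hη.2
    linarith
  show q = bot
  rw [bot]
  exact Prod.ext ha (Prod.ext hb h0)

end analysis

section continuity

variable {E : Type*}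

lemma col_cont [NormedAddCommGroup E] [NormedSpace ℝ E] {m p : ℝ} (hp : 0 < p)
    {F : E → ℝ × ℝ × ℝ} (hF : Continuous F) (hmem : ∀ x, F x ∈ HV m p) :
    Continuous fun x => col (F x) := by
  rw [continuous_iff_continuousAt]
  intro x
  by_cases h0 : (F x).2.2 = 0
  · by_cases hclm : x ∈ closure {y | (F y).2.2 ≠ 0}
    · have hbot : F x = bot := key hp hF hmem hclm h0
      rw [ContinuousAt, tendsto_iff_dist_tendsto_zero]
      have hcolx : col (F x) = F x := by rw [col, if_pos h0, hbot]
      rw [hcolx]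
      have hb : ∀ y, dist (col (F y)) (F x) ≤ dist (F y) (F x) := by
        intro y
        rw [col]
        split
        · rw [hbot]; simp [dist_nonneg]
        · exact le_refl _
      have ht : Filter.Tendsto (fun y => dist (F y) (F x)) (nhds x) (nhds 0) :=
        tendsto_iff_dist_tendsto_zero.mp hF.continuousAt
      exact squeeze_zero (fun y => dist_nonneg) hb ht
    · have hev : (fun y => col (F y)) =ᶠ[nhds x] fun _ => bot := by
        refine Filter.eventually_of_mem (IsOpen.mem_nhds isClosed_closure.isOpen_compl hclm) ?_
        intro y hy
        have : (F y).2.2 = 0 := by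
          by_contra hne
          exact hy (subset_closure hne)
        simp only [col, if_pos this]
      exact (continuousAt_congr hev).mpr continuousAt_const
  · have hopen : IsOpen {y | (F y).2.2 ≠ 0} :=
      isOpen_compl_singleton.preimage ((continuous_snd.comp continuous_snd).comp hF)
    have hev : (fun y => col (F y)) =ᶠ[nhds x] F := by
      refine Filter.eventually_of_mem (hopen.mem_nhds h0) ?_
      intro y hy
      simp only [col, if_neg hy]
    exact (continuousAt_congr hev).mpr hF.continuousAt

lemma slide_cont_m [TopologicalSpace E] {m p : ℝ}
    {G : E → ℝ × ℝ × ℝ} (hG : Continuous G) (hrho : ∀ x, 1 ≤ rho (G x)) :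
    Continuous fun x => slide p (G x) m := by
  have h1 : Continuous fun x => (G x).1 := continuous_fst.comp hG
  have h2 : Continuous fun x => (G x).2.1 :=
    continuous_fst.comp (continuous_snd.comp hG)
  have hρ : Continuous fun x => rho (G x) := by
    exact Real.continuous_sqrt.comp ((h1.pow 2).add (h2.pow 2))
  have hρ0 : ∀ x, rho (G x) ≠ 0 := fun x => by linarith [hrho x]
  have hd1 : Continuous fun x => (G x).1 / rho (G x) := h1.div hρ hρ0
  have hd2 : Continuous fun x => (G x).2.1 / rho (G x) := h2.div hρ hρ0
  have harc : Continuous fun x => Real.arccos ((G x).1 / rho (G x)) :=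
    Real.continuous_arccos.comp hd1
  have hr' : Continuous fun x =>
      Real.arccos ((G x).1 / rho (G x)) / π * Real.sin (π * p / m) + 2 :=
    (((harc.div_const π).mul continuous_const).add continuous_const)
  exact ((hr'.mul hd1).prodMk ((hr'.mul hd2).prodMk continuous_const))

lemma slide_cont_homotopy [TopologicalSpace E] {m p : ℝ} (hm : 0 < m)
    {G : E → ℝ × ℝ × ℝ} (hG : Continuous G) (hW : ∀ x, G x ∈ Wplus m p)
    {u : E → ℝ} (hu : Continuous u) (hu01 : ∀ x, u x ∈ Icc (0:ℝ) 1) :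
    Continuous fun x => slide p (G x) ((1 - u x) * (G x).2.2 + u x * m) := by
  have h1 : Continuous fun x => (G x).1 := continuous_fst.comp hG
  have h2 : Continuous fun x => (G x).2.1 :=
    continuous_fst.comp (continuous_snd.comp hG)
  have h3 : Continuous fun x => (G x).2.2 :=
    continuous_snd.comp (continuous_snd.comp hG)
  have hρ : Continuous fun x => rho (G x) :=
    Real.continuous_sqrt.comp ((h1.pow 2).add (h2.pow 2))
  have hρ0 : ∀ x, rho (G x) ≠ 0 := fun x => by linarith [rho_ge_one_Wplus (hW x)]
  have hd1 : Continuous fun x => (G x).1 / rho (G x) := h1.div hρ hρ0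
  have hd2 : Continuous fun x => (G x).2.1 / rho (G x) := h2.div hρ hρ0
  have hA : Continuous fun x => Real.arccos ((G x).1 / rho (G x)) / π :=
    (Real.continuous_arccos.comp hd1).div_const π
  set hh : E → ℝ := fun x => (1 - u x) * (G x).2.2 + u x * m with hhdef
  have hhc : Continuous hh := ((continuous_const.sub hu).mul h3).add (hu.mul continuous_const)
  rw [continuous_iff_continuousAt]
  intro x
  by_cases hx0 : hh x = 0
  -- degenerate case : G x = bot, u x = 0
  · have hz : (G x).2.2 ∈ Icc (0:ℝ) m := z_mem_Wplus hm.le (hW x)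
    have hu0 : u x = 0 := by
      have h4 := (hu01 x).1
      have h5 := (hu01 x).2
      have h6 : 0 ≤ (1 - u x) * (G x).2.2 := mul_nonneg (by linarith) hz.1
      have h7 : 0 ≤ u x * m := mul_nonneg h4 hm.le
      rw [hhdef] at hx0
      simp only at hx0
      have hum : u x * m = 0 := by linarith
      rcases mul_eq_zero.mp hum with h | h
      · exact h
      · exact absurd h hm.ne'
    have hz0 : (G x).2.2 = 0 := by
      rw [hhdef] at hx0
      simp only [hu0] at hx0
      linarith [hx0]
    have hbot : G x = bot := z_zero_Wplus (hW x) hz0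
    -- limit of the scalar coefficient
    have hAx : Real.arccos ((G x).1 / rho (G x)) / π = 0 := by
      rw [hbot, rho_bot]
      norm_num [bot, Real.arccos_one]
    have hAS : Filter.Tendsto
        (fun y => Real.arccos ((G y).1 / rho (G y)) / π * Real.sin (π * p / hh y))
        (nhds x) (nhds 0) := by
      refine squeeze_zero_norm (a := fun y => |Real.arccos ((G y).1 / rho (G y)) / π|)
        (fun y => ?_) ?_
      · rw [Real.norm_eq_abs, abs_mul]
        have := abs_sin_le_one (π * p / hh y)
        nlinarith [abs_nonneg (Real.arccos ((G y).1 / rho (G y)) / π)]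
      · have : Filter.Tendsto (fun y => Real.arccos ((G y).1 / rho (G y)) / π)
            (nhds x) (nhds 0) := by
          have := hA.continuousAt (x := x)
          rwa [ContinuousAt, hAx] at this
        simpa using this.abs
    have hrr' : Filter.Tendsto
        (fun y => Real.arccos ((G y).1 / rho (G y)) / π * Real.sin (π * p / hh y) + 2)
        (nhds x) (nhds 2) := by
      simpa using hAS.add (tendsto_const_nhds (x := (2:ℝ)))
    have hc1 : Filter.Tendsto (fun y =>
        (Real.arccos ((G y).1 / rho (G y)) / π * Real.sin (π * p / hh y) + 2)
          * ((G y).1 / rho (G y))) (nhds x) (nhds 2) := by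
      have hl : Filter.Tendsto (fun y => (G y).1 / rho (G y)) (nhds x)
          (nhds ((G x).1 / rho (G x))) := hd1.continuousAt
      have hval : (G x).1 / rho (G x) = 1 := by rw [hbot, rho_bot]; norm_num [bot]
      rw [hval] at hl
      simpa using hrr'.mul hl
    have hc2 : Filter.Tendsto (fun y =>
        (Real.arccos ((G y).1 / rho (G y)) / π * Real.sin (π * p / hh y) + 2)
          * ((G y).2.1 / rho (G y))) (nhds x) (nhds 0) := by
      have hl : Filter.Tendsto (fun y => (G y).2.1 / rho (G y)) (nhds x)
          (nhds ((G x).2.1 / rho (G x))) := hd2.continuousAt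
      have hval : (G x).2.1 / rho (G x) = 0 := by rw [hbot, rho_bot]; norm_num [bot]
      rw [hval] at hl
      simpa using hrr'.mul hl
    have hc3 : Filter.Tendsto hh (nhds x) (nhds 0) := by
      have := hhc.continuousAt (x := x)
      rwa [ContinuousAt, hx0] at this
    rw [ContinuousAt]
    have hvx : slide p (G x) (hh x) = ((2:ℝ), (0:ℝ), (0:ℝ)) := by
      rw [hbot, slide_bot, hx0]
    rw [hvx]
    exact hc1.prodMk_nhds (hc2.prodMk_nhds hc3)
  -- nondegenerate case
  · have hsin : ContinuousAt (fun y => Real.sin (π * p / hh y)) x :=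
      Real.continuous_sin.continuousAt.comp
        ((continuousAt_const.div hhc.continuousAt hx0))
    have hr' : ContinuousAt (fun y =>
        Real.arccos ((G y).1 / rho (G y)) / π * Real.sin (π * p / hh y) + 2) x :=
      ((hA.continuousAt.mul hsin).add continuousAt_const)
    exact ((hr'.mul hd1.continuousAt).prodMk
      ((hr'.mul hd2.continuousAt).prodMk hhc.continuousAt))

end continuity

section phase1

/-- phase-1 homotopy: contract the pedestal towards the junction point -/
def ped1 (f : ℝ → ℝ × ℝ × ℝ) (w : ℝ × ℝ) : ℝ × ℝ × ℝ :=
  if (f w.2).2.2 = 0 then bot + (1 - cl w.1) • (f w.2 - bot) else f w.2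

lemma ped1_cont {m p : ℝ} (hp : 0 < p) {f : ℝ → ℝ × ℝ × ℝ}
    (hf : Continuous f) (hmem : ∀ s, f s ∈ HV m p) : Continuous (ped1 f) := by
  have hF : Continuous fun w : ℝ × ℝ => f w.2 := hf.comp continuous_snd
  have hFz : Continuous fun w : ℝ × ℝ => (f w.2).2.2 :=
    (continuous_snd.comp continuous_snd).comp hF
  rw [continuous_iff_continuousAt]
  intro w
  by_cases h0 : (f w.2).2.2 = 0
  · by_cases hclm : w ∈ closure {v : ℝ × ℝ | (f v.2).2.2 ≠ 0}
    · have hbot : f w.2 = bot := key hp hF (fun v => hmem v.2) hclm h0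
      have hval : ped1 f w = bot := by
        rw [ped1, if_pos h0, hbot]; simp
      rw [ContinuousAt, hval, tendsto_iff_dist_tendsto_zero]
      have hb : ∀ v : ℝ × ℝ, dist (ped1 f v) bot ≤ dist (f v.2) bot := by
        intro v
        rw [ped1]
        split
        · rw [dist_eq_norm, dist_eq_norm]
          have : bot + (1 - cl v.1) • (f v.2 - bot) - bot = (1 - cl v.1) • (f v.2 - bot) := by
            abel
          rw [this, norm_smul]
          have hc := cl_mem v.1
          have h1 : |1 - cl v.1| ≤ 1 := by
            rw [abs_le]; constructor <;> [linarith [hc.2]; linarith [hc.1]]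
          calc ‖(1 - cl v.1)‖ * ‖f v.2 - bot‖ ≤ 1 * ‖f v.2 - bot‖ := by
                exact mul_le_mul_of_nonneg_right h1 (norm_nonneg _)
            _ = ‖f v.2 - bot‖ := one_mul _
        · exact le_refl _
      have ht : Filter.Tendsto (fun v : ℝ × ℝ => dist (f v.2) bot) (nhds w) (nhds 0) := by
        have hcont : Continuous fun v : ℝ × ℝ => dist (f v.2) bot :=
          hF.dist continuous_const
        have := hcont.continuousAt (x := w)
        rw [ContinuousAt] at this
        rwa [hbot, dist_self] at this
      exact squeeze_zero (fun v => dist_nonneg) hb ht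
    · have hev : ped1 f =ᶠ[nhds w]
          fun v => bot + (1 - cl v.1) • (f v.2 - bot) := by
        refine Filter.eventually_of_mem (IsOpen.mem_nhds isClosed_closure.isOpen_compl hclm) ?_
        intro v hv
        have : (f v.2).2.2 = 0 := by
          by_contra hne
          exact hv (subset_closure hne)
        rw [ped1, if_pos this]
      refine (continuousAt_congr hev).mpr ?_
      exact (continuousAt_const.add (((continuous_const.sub
        (continuous_cl.comp continuous_fst)).smul (hF.sub continuous_const)).continuousAt))
  · have hev : ped1 f =ᶠ[nhds w] fun v => f v.2 := by
      have hopen : IsOpen {v : ℝ × ℝ | (f v.2).2.2 ≠ 0} :=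
        isOpen_compl_singleton.preimage hFz
      refine Filter.eventually_of_mem (hopen.mem_nhds h0) ?_
      intro v hv
      rw [ped1, if_neg hv]
    exact (continuousAt_congr hev).mpr hF.continuousAt

lemma ped1_mem {m p : ℝ} {f : ℝ → ℝ × ℝ × ℝ} (hmem : ∀ s, f s ∈ HV m p) (w : ℝ × ℝ) :
    ped1 f w ∈ HV m p := by
  rw [ped1]
  split
  · rename_i h0
    have hped := mem_pedestal_of_z (hmem w.2) h0
    left
    set c := 1 - cl w.1 with hc
    have hc0 : 0 ≤ c := by have := (cl_mem w.1).2; rw [hc]; linarith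
    have hc1 : c ≤ 1 := by have := (cl_mem w.1).1; rw [hc]; linarith
    set q := f w.2 with hqd
    have h9 : q.1^2 + q.2.1^2 ≤ 9 := hped.1
    constructor
    · show (bot + c • (q - bot)).1 ^ 2 + (bot + c • (q - bot)).2.1 ^ 2 ≤ 9
      have e1 : (bot + c • (q - bot)).1 = 2 + c * (q.1 - 2) := by
        simp [bot, Prod.smul_def, smul_eq_mul]
      have e2 : (bot + c • (q - bot)).2.1 = c * q.2.1 := by
        simp [bot, Prod.smul_def, smul_eq_mul]
      rw [e1, e2]
      nlinarith [mul_nonneg (mul_nonneg hc0 (by linarith : (0:ℝ) ≤ 1 - c))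
        (add_nonneg (sq_nonneg (q.1 - 2)) (sq_nonneg q.2.1))]
    · show (bot + c • (q - bot)).2.2 = 0
      simp [bot, Prod.smul_def, smul_eq_mul, h0]
  · exact hmem w.2

lemma ped1_zero {f : ℝ → ℝ × ℝ × ℝ} (s : ℝ) : ped1 f (0, s) = f s := by
  rw [ped1]
  split <;> simp [cl_zero]

lemma ped1_one {f : ℝ → ℝ × ℝ × ℝ} (s : ℝ) : ped1 f (1, s) = col (f s) := by
  rw [ped1, col]
  split <;> simp [cl_one, bot]

lemma ped1_of_ne {f : ℝ → ℝ × ℝ × ℝ} {u s : ℝ} (h : (f s).2.2 ≠ 0) :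
    ped1 f (u, s) = f s := by
  rw [ped1, if_neg h]

end phase1



section core

open unitInterval

/-- clamp ℝ onto the unit interval -/
def projI : ℝ → I := Set.projIcc (0:ℝ) 1 zero_le_one

lemma projI_coe (t : I) : projI ↑t = t := Set.projIcc_val zero_le_one t

lemma continuous_projI : Continuous projI := continuous_projIcc

lemma slide_homotopy_mem {m p : ℝ} (hm : 0 < m) {q : ℝ × ℝ × ℝ} (hq : q ∈ Wplus m p)
    {c : ℝ} (hc : c ∈ Icc (0:ℝ) 1) : slide p q ((1 - c) * q.2.2 + c * m) ∈ HV m p := by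
  have hz := z_mem_Wplus hm.le hq
  by_cases h0 : (1 - c) * q.2.2 + c * m = 0
  · have hcm : c * m = 0 := by
      have h6 : 0 ≤ (1 - c) * q.2.2 := mul_nonneg (by linarith [hc.2]) hz.1
      have h7 : 0 ≤ c * m := mul_nonneg hc.1 hm.le
      linarith
    have hc0 : c = 0 := by
      rcases mul_eq_zero.mp hcm with h | h
      · exact h
      · exact absurd h hm.ne'
    have hq0 : q.2.2 = 0 := by
      rw [hc0] at h0; simpa using h0
    have hbot : q = bot := z_zero_Wplus hq hq0
    rw [hbot, slide_bot]
    have : (1 - c) * bot.2.2 + c * m = 0 := by rw [← hbot]; exact h0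
    rw [this]
    exact Or.inl bot_mem_pedestal
  · have hh : (1 - c) * q.2.2 + c * m ∈ Ioc (0:ℝ) m := by
      constructor
      · have hge : 0 ≤ (1 - c) * q.2.2 + c * m :=
          add_nonneg (mul_nonneg (by linarith [hc.2]) hz.1) (mul_nonneg hc.1 hm.le)
        exact hge.lt_of_ne (Ne.symm h0)
      · nlinarith [hz.2, hc.1, hc.2, hm.le, hz.1]
    exact wall_subset_HV (slide_mem_wall_Wplus hq hh)

variable {m p : ℝ}

lemma inj_core (hm : 0 < m) (hp : 0 < p)
    {zT : ↥(HVtop m p)} {zH : ↥(HV m p)}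
    (hT : (zT : ℝ × ℝ × ℝ) = (2, 0, m)) (hH : (zH : ℝ × ℝ × ℝ) = (2, 0, m))
    (τ : Path zT zT) (γ'' : Path zH zH)
    (hpt : ∀ t, ((τ t : ℝ × ℝ × ℝ)) = ((γ'' t : ℝ × ℝ × ℝ)))
    (hhom : γ''.Homotopic (Path.refl zH)) : τ.Homotopic (Path.refl zT) := by
  obtain ⟨H⟩ := hhom
  set F : ℝ × ℝ → ℝ × ℝ × ℝ := fun w => ↑(H (projI w.1, projI w.2)) with hFdef
  have hFc : Continuous F := continuous_subtype_val.comp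
    (H.continuous.comp ((continuous_projI.comp continuous_fst).prodMk
      (continuous_projI.comp continuous_snd)))
  have hFmem : ∀ w, F w ∈ HV m p := fun w => (H _).2
  have hgc : Continuous fun w => col (F w) := col_cont hp hFc hFmem
  have hgW : ∀ w, col (F w) ∈ Wplus m p := fun w => col_mem_Wplus (hFmem w)
  have hΦc : Continuous fun w => slide p (col (F w)) m :=
    slide_cont_m hgc fun w => rho_ge_one_Wplus (hgW w)
  have hΦmem : ∀ w, slide p (col (F w)) m ∈ HVtop m p :=
    fun w => slide_m_mem_top_Wplus (hgW w)
  have heval : ∀ q : ℝ × ℝ × ℝ, q ∈ HVtop m p → slide p (col q) m = q := by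
    intro q hq
    have hz : q.2.2 = m := top_z hq
    have hcq : col q = q := by rw [col, if_neg (by rw [hz]; exact hm.ne')]
    rw [hcq, slide_fix_top hm hq]
  have hFval : ∀ (t s : I), F (↑t, ↑s) = ↑(H (t, s)) := by
    intro t s; rw [hFdef]; simp only [projI_coe]
  refine ⟨{ toFun := fun ts => ⟨slide p (col (F (↑ts.1, ↑ts.2))) m, hΦmem _⟩
            continuous_toFun := ?_
            map_zero_left := ?_
            map_one_left := ?_
            prop' := ?_ }⟩
  · exact (hΦc.comp ((continuous_subtype_val.comp continuous_fst).prodMk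
      (continuous_subtype_val.comp continuous_snd))).subtype_mk _
  · intro s
    apply Subtype.ext
    show slide p (col (F (↑(0:I), ↑s))) m = ↑(τ s)
    rw [hFval 0 s, H.apply_zero]
    show slide p (col ↑(γ'' s)) m = ↑(τ s)
    rw [← hpt s]
    exact heval _ (τ s).2
  · intro s
    apply Subtype.ext
    show slide p (col (F (↑(1:I), ↑s))) m = ↑(Path.refl zT s)
    rw [hFval 1 s, H.apply_one]
    show slide p (col ↑(zH)) m = ↑zT
    rw [hH, hT]
    exact heval _ basepoint_mem_top
  · intro t x hx
    apply Subtype.ext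
    show slide p (col (F (↑t, ↑x))) m = ↑(τ x)
    rw [hFval t x, ContinuousMap.HomotopyRel.eq_fst H t hx]
    show slide p (col ↑(γ'' x)) m = ↑(τ x)
    rw [← hpt x]
    exact heval _ (τ x).2

lemma surj_core (hm : 0 < m) (hp : 0 < p)
    {zT : ↥(HVtop m p)} {zH : ↥(HV m p)}
    (hT : (zT : ℝ × ℝ × ℝ) = (2, 0, m)) (hH : (zH : ℝ × ℝ × ℝ) = (2, 0, m))
    (γ' : Path zH zH) :
    ∃ (τ : Path zT zT) (γ'' : Path zH zH),
      (∀ t, ((τ t : ℝ × ℝ × ℝ)) = ((γ'' t : ℝ × ℝ × ℝ))) ∧ γ'.Homotopic γ'' := by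
  classical
  set fγ : ℝ → ℝ × ℝ × ℝ := fun s => ↑(γ' (projI s)) with hfγdef
  have hfc : Continuous fγ :=
    continuous_subtype_val.comp (γ'.continuous.comp continuous_projI)
  have hfmem : ∀ s, fγ s ∈ HV m p := fun s => (γ' _).2
  have hfγ : ∀ t : I, fγ ↑t = ↑(γ' t) := fun t => by rw [hfγdef]; simp only [projI_coe]
  have hzm_ne : (((2:ℝ), (0:ℝ), m) : ℝ × ℝ × ℝ).2.2 ≠ 0 := hm.ne'
  have hfbase : ∀ t : I, (t = 0 ∨ t = 1) → fγ ↑t = ((2:ℝ), (0:ℝ), m) := by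
    rintro t (rfl | rfl)
    · rw [hfγ 0, γ'.source, hH]
    · rw [hfγ 1, γ'.target, hH]
  -- the collapsed loop
  set g : ℝ → ℝ × ℝ × ℝ := fun s => col (fγ s) with hgdef
  have hgc : Continuous g := col_cont hp hfc hfmem
  have hgW : ∀ s, g s ∈ Wplus m p := fun s => col_mem_Wplus (hfmem s)
  have hgmem : ∀ s, g s ∈ HV m p := fun s => Wplus_subset_HV (hgW s)
  have hgbase : ∀ t : I, (t = 0 ∨ t = 1) → g ↑t = ((2:ℝ), (0:ℝ), m) := by
    intro t ht
    rw [hgdef]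
    simp only [hfbase t ht]
    rw [col, if_neg hzm_ne]
  -- the top loop
  set τf : ℝ → ℝ × ℝ × ℝ := fun s => slide p (g s) m with hτdef
  have hτc : Continuous τf := slide_cont_m hgc fun s => rho_ge_one_Wplus (hgW s)
  have hτmem : ∀ s, τf s ∈ HVtop m p := fun s => slide_m_mem_top_Wplus (hgW s)
  have hτbase : ∀ t : I, (t = 0 ∨ t = 1) → τf ↑t = ((2:ℝ), (0:ℝ), m) := by
    intro t ht
    rw [hτdef]
    simp only [hgbase t ht]
    exact slide_fix_top hm basepoint_mem_top
  refine ⟨⟨⟨fun t => ⟨τf ↑t, hτmem _⟩, (hτc.comp continuous_subtype_val).subtype_mk _⟩,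
      Subtype.ext (by show τf ↑(0:I) = (zT : ℝ × ℝ × ℝ); rw [hτbase 0 (Or.inl rfl), hT]),
      Subtype.ext (by show τf ↑(1:I) = (zT : ℝ × ℝ × ℝ); rw [hτbase 1 (Or.inr rfl), hT])⟩,
    ⟨⟨fun t => ⟨τf ↑t, wall_subset_HV (top_subset_wall hm (hτmem _))⟩,
      (hτc.comp continuous_subtype_val).subtype_mk _⟩,
      Subtype.ext (by show τf ↑(0:I) = (zH : ℝ × ℝ × ℝ); rw [hτbase 0 (Or.inl rfl), hH]),
      Subtype.ext (by show τf ↑(1:I) = (zH : ℝ × ℝ × ℝ); rw [hτbase 1 (Or.inr rfl), hH])⟩,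
    fun t => rfl, ?_⟩
  -- the middle loop
  have hγcsrc : g ↑(0:I) = ↑zH := by rw [hgbase 0 (Or.inl rfl), hH]
  have hγctgt : g ↑(1:I) = ↑zH := by rw [hgbase 1 (Or.inr rfl), hH]
  set γc : Path zH zH :=
    ⟨⟨fun t => ⟨g ↑t, hgmem _⟩, (hgc.comp continuous_subtype_val).subtype_mk _⟩,
      Subtype.ext (show g ↑(0:I) = (zH : ℝ × ℝ × ℝ) from hγcsrc), Subtype.ext (show g ↑(1:I) = (zH : ℝ × ℝ × ℝ) from hγctgt)⟩ with hγcdef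
  -- homotopy A : γ' to γc by contracting the pedestal
  have hA : γ'.Homotopic γc := by
    refine ⟨{ toFun := fun ts => ⟨ped1 fγ (↑ts.1, ↑ts.2), ped1_mem hfmem _⟩
              continuous_toFun := ?_
              map_zero_left := ?_
              map_one_left := ?_
              prop' := ?_ }⟩
    · exact ((ped1_cont hp hfc hfmem).comp
        ((continuous_subtype_val.comp continuous_fst).prodMk
          (continuous_subtype_val.comp continuous_snd))).subtype_mk _
    · intro s
      apply Subtype.ext
      show ped1 fγ (↑(0:I), ↑s) = ↑(γ' s)
      rw [show ((0:I):ℝ) = 0 from rfl, ped1_zero, hfγ]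
    · intro s
      apply Subtype.ext
      show ped1 fγ (↑(1:I), ↑s) = ↑(γc s)
      rw [show ((1:I):ℝ) = 1 from rfl, ped1_one]
      rfl
    · intro t x hx
      apply Subtype.ext
      show ped1 fγ (↑t, ↑x) = ↑(γ' x)
      have hb : fγ ↑x = ((2:ℝ), (0:ℝ), m) := by
        rcases hx with h | h
        · exact hfbase x (Or.inl h)
        · exact hfbase x (Or.inr h)
      rw [ped1_of_ne (by rw [hb]; exact hzm_ne), hb]
      rw [← hb, hfγ]
  -- homotopy B : γc to γ'' by sliding up the wall
  have hB : γc.Homotopic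
      (⟨⟨fun t => ⟨τf ↑t, wall_subset_HV (top_subset_wall hm (hτmem _))⟩,
        (hτc.comp continuous_subtype_val).subtype_mk _⟩,
        Subtype.ext (by show τf ↑(0:I) = (zH : ℝ × ℝ × ℝ); rw [hτbase 0 (Or.inl rfl), hH]),
        Subtype.ext (by show τf ↑(1:I) = (zH : ℝ × ℝ × ℝ); rw [hτbase 1 (Or.inr rfl), hH])⟩ : Path zH zH) := by
    refine ⟨{ toFun := fun ts =>
                ⟨slide p (g ↑ts.2) ((1 - cl ↑ts.1) * (g ↑ts.2).2.2 + cl ↑ts.1 * m),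
                 slide_homotopy_mem hm (hgW _) (cl_mem _)⟩
              continuous_toFun := ?_
              map_zero_left := ?_
              map_one_left := ?_
              prop' := ?_ }⟩
    · have hbig : Continuous fun w : ℝ × ℝ =>
          slide p (g w.2) ((1 - cl w.1) * (g w.2).2.2 + cl w.1 * m) :=
        slide_cont_homotopy hm (hgc.comp continuous_snd)
          (fun w => hgW w.2) (continuous_cl.comp continuous_fst) (fun w => cl_mem w.1)
      exact (hbig.comp ((continuous_subtype_val.comp continuous_fst).prodMk
        (continuous_subtype_val.comp continuous_snd))).subtype_mk _
    · intro s
      apply Subtype.ext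
      show slide p (g ↑s) ((1 - cl ↑(0:I)) * (g ↑s).2.2 + cl ↑(0:I) * m) = ↑(γc s)
      rw [show ((0:I):ℝ) = 0 from rfl, cl_zero]
      rw [show (1 - 0) * (g ↑s).2.2 + 0 * m = (g ↑s).2.2 by ring]
      exact slide_self_Wplus (hgW _)
    · intro s
      apply Subtype.ext
      show slide p (g ↑s) ((1 - cl ↑(1:I)) * (g ↑s).2.2 + cl ↑(1:I) * m) = τf ↑s
      rw [show ((1:I):ℝ) = 1 from rfl, cl_one]
      rw [show (1 - 1) * (g ↑s).2.2 + 1 * m = m by ring]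
    · intro t x hx
      apply Subtype.ext
      show slide p (g ↑x) ((1 - cl ↑t) * (g ↑x).2.2 + cl ↑t * m) = ↑(γc x)
      have hb : g ↑x = ((2:ℝ), (0:ℝ), m) := by
        rcases hx with h | h
        · exact hgbase x (Or.inl h)
        · exact hgbase x (Or.inr h)
      have hz : (g ↑x).2.2 = m := by rw [hb]
      rw [hz, show (1 - cl ↑t) * m + cl ↑t * m = m by ring]
      show slide p (g ↑x) m = ↑(γc x)
      rw [hb]
      have := slide_fix_top (p := p) hm basepoint_mem_top
      rw [this]
      show ((2:ℝ), (0:ℝ), m) = g ↑x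
      rw [hb]
  exact hA.trans hB

end core


end HVaux

open scoped FundamentalGroupoid
open CategoryTheory

attribute [local instance] Path.Homotopic.setoid

/-- The class of a loop in the fundamental group. -/
def loopClass {A : Type u} [TopologicalSpace A] {a : A} (γ : Path a a) :
    FundamentalGroup A a :=
  FundamentalGroup.fromPath (X := TopCat.of A) ⟦γ⟧

/-- the inclusion of the top edge of `HV(m,p)` into `HV(m,p)` induces an
isomorphism of fundamental groups based at `z_m = (2,0,m)`: there is an isomorphism
sending the class of any loop in the top edge to the class of the same loop viewed
in `HV(m,p)`. -/
theorem HV_topEdge_pi1_iso (m p : ℝ) (hm : 0 < m) (hp : 0 < p)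
    (zT : HVtop m p) (zH : HV m p)
    (hT : (zT : ℝ × ℝ × ℝ) = (2, 0, m)) (hH : (zH : ℝ × ℝ × ℝ) = (2, 0, m)) :
    ∃ e : FundamentalGroup (HVtop m p) zT ≃* FundamentalGroup (HV m p) zH,
      ∀ (γ : Path zT zT) (γ' : Path zH zH),
        (∀ t, (γ t : ℝ × ℝ × ℝ) = (γ' t : ℝ × ℝ × ℝ)) →
          e (loopClass γ) = loopClass γ' := by
  classical
  have hTH : ((zT : ℝ × ℝ × ℝ)) = (zH : ℝ × ℝ × ℝ) := hT.trans hH.symm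
  set ι : C(↥(HVtop m p), ↥(HV m p)) :=
    ⟨fun q => ⟨↑q, HVaux.wall_subset_HV (HVaux.top_subset_wall hm q.2)⟩,
     continuous_subtype_val.subtype_mk _⟩ with hιdef
  have hιz : ι zT = zH := Subtype.ext hTH
  set Ψ : FundamentalGroup (HVtop m p) zT →* FundamentalGroup (HV m p) zH :=
    FundamentalGroup.mapOfEq ι hιz
    with hΨdef
  have hψeval : ∀ (γ : Path zT zT) (γ' : Path zH zH),
      (∀ t, (γ t : ℝ × ℝ × ℝ) = (γ' t : ℝ × ℝ × ℝ)) → Ψ (loopClass γ) = loopClass γ' := by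
    intro γ γ' hpt
    rw [hΨdef, FundamentalGroup.mapOfEq_apply]
    apply eq_of_heq
    refine (Path.Homotopic.Quotient.cast_heq _ _).trans ?_
    exact Path.Homotopic.hpath_hext (p₁ := γ.map ι.continuous) (p₂ := γ')
      fun t => Subtype.ext (hpt t)
  have hinj : Function.Injective Ψ := by
    rw [injective_iff_map_eq_one]
    intro g hg
    obtain ⟨τ, hτ⟩ := Quotient.exists_rep (g : Path.Homotopic.Quotient zT zT)
    have hgτ : g = loopClass τ := hτ.symm
    set γ'' : Path zH zH :=
      ⟨⟨fun t => ι (τ t), ι.continuous.comp (τ.continuous)⟩,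
        by show ι (τ 0) = zH; rw [τ.source, hιz],
        by show ι (τ 1) = zH; rw [τ.target, hιz]⟩ with hγ''def
    have hψ : Ψ (loopClass τ) = loopClass γ'' := hψeval τ γ'' fun t => rfl
    rw [hgτ, hψ] at hg
    have hhom : (⟦γ''⟧ : Path.Homotopic.Quotient zH zH) = ⟦Path.refl zH⟧ :=
      hg
    have hhomot : γ''.Homotopic (Path.refl zH) := Quotient.exact hhom
    have hfin := HVaux.inj_core hm hp hT hH τ γ'' (fun t => rfl) hhomot
    rw [hgτ]
    show (⟦τ⟧ : Path.Homotopic.Quotient zT zT) = (1 : FundamentalGroup (HVtop m p) zT)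
    exact Quotient.sound hfin
  have hsurj : Function.Surjective Ψ := by
    intro a
    obtain ⟨γ', hγ'⟩ := Quotient.exists_rep (a : Path.Homotopic.Quotient zH zH)
    obtain ⟨τ, γ'', hpt, hhom⟩ := HVaux.surj_core hm hp hT hH γ'
    refine ⟨loopClass τ, ?_⟩
    rw [hψeval τ γ'' hpt]
    show (⟦γ''⟧ : Path.Homotopic.Quotient zH zH) = a
    rw [← hγ']
    exact (Quotient.sound hhom).symm
  exact ⟨MulEquiv.ofBijective Ψ ⟨hinj, hsurj⟩, fun γ γ' hpt => hψeval γ γ' hpt⟩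

end
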